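/- For a graph G and an edge uv, the graph G*u*v*u equals G*v*u*v, where G*w denotes local complementation at w; i.e., the pivot on an edge is well-defined independently of the order of the endpoints. -/

import Mathlib

/-- Local complementation of `G` at `v`: complement the edges inside `N(v)`. -/
def localComp {V : Type*} (G : SimpleGraph V) (v : V) : SimpleGraph V where
  Adj a b := a ≠ b ∧ ((G.Adj v a ∧ G.Adj v b) ↔ ¬ G.Adj a b)
  symm := ⟨by
    rintro a b ⟨hne, h⟩
    have hadj : G.Adj a b ↔ G.Adj b a := G.adj_comm a b
    exact ⟨hne.symm, by tauto⟩⟩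
  loopless := ⟨fun a h => h.1 rfl⟩

set_option maxHeartbeats 4000000 in
/-- the pivot on an edge uv is well defined:
`G*u*v*u = G*v*u*v` for every edge uv of G. -/
theorem pivot_well_defined {V : Type*} (G : SimpleGraph V) (u v : V)
    (huv : G.Adj u v) :
    localComp (localComp (localComp G u) v) u
      = localComp (localComp (localComp G v) u) v := by
  have hne : u ≠ v := huv.ne
  have hvu : G.Adj v u := huv.symm
  ext a b
  by_cases hab : a = b
  · subst hab; simp [localComp]
  by_cases hua : u = a <;> by_cases hub : u = b <;>
    by_cases hva : v = a <;> by_cases hvb : v = b <;> subst_vars <;>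
    simp only [localComp, ne_eq] <;>
    (try simp only [G.adj_comm v u]) <;> (try simp only [G.adj_comm a u]) <;>
    (try simp only [G.adj_comm a v]) <;> (try simp only [G.adj_comm b u]) <;>
    (try simp only [G.adj_comm b v]) <;> (try simp only [G.adj_comm b a]) <;>
    (try by_cases h1 : G.Adj u v) <;> (try by_cases h2 : G.Adj u a) <;>
    (try by_cases h3 : G.Adj u b) <;> (try by_cases h4 : G.Adj v a) <;>
    (try by_cases h5 : G.Adj v b) <;> (try by_cases h6 : G.Adj a b) <;>
    simp_all [eq_comm]
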